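/- Let G = Cay(Γ, S) be a Cayley graph of a finite abelian group Γ with symmetric generating set S (closed under inverses, not containing the identity) of size δ. If there is an ordering s_1, …, s_δ of the elements of S such that s_{2i−1}·s_{2i} ∉ S ∪ {e} for all 1 ≤ i ≤ ⌊δ/2⌋, then the neighbor connectivity of G satisfies κ_NB(G) ≤ ⌈δ/2⌉. -/

import Mathlib

open SimpleGraph

/-- Vertex connectivity: the least number of vertices whose removal leaves
a disconnected or trivial (single-vertex) graph. -/
noncomputable def vConn {V : Type*} (G : SimpleGraph V) : ℕ :=
  sInf {m | ∃ S : Set V, S.Finite ∧ S.ncard = m ∧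
    (¬ (G.induce Sᶜ).Connected ∨ ∃ v, Sᶜ = {v})}

/-- Closed neighborhood of a set of vertices. -/
def closedNbhd {V : Type*} (G : SimpleGraph V) (U : Set V) : Set V :=
  U ∪ {v | ∃ u ∈ U, G.Adj u v}

/-- The survival graph `G ⊖ U`: the subgraph induced on vertices
outside the closed neighborhood of `U`. -/
def survival {V : Type*} (G : SimpleGraph V) (U : Set V) :
    SimpleGraph (↥(closedNbhd G U)ᶜ) := G.induce (closedNbhd G U)ᶜ

/-- The survival graph of `U` is disconnected, complete, or empty. -/
def SurvivalBad {V : Type*} (G : SimpleGraph V) (U : Set V) : Prop :=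
  ((closedNbhd G U)ᶜ ≠ ∅ ∧ ¬ (survival G U).Connected) ∨
  (∀ a ∈ (closedNbhd G U)ᶜ, ∀ b ∈ (closedNbhd G U)ᶜ, a ≠ b → G.Adj a b) ∨
  (closedNbhd G U)ᶜ = ∅

/-- Neighbor connectivity. -/
noncomputable def nbConn {V : Type*} (G : SimpleGraph V) : ℕ :=
  sInf {m | ∃ U : Set V, U.Finite ∧ U.ncard = m ∧ SurvivalBad G U}

/-- The `k`-ary `n`-cube. -/
def QCube (n k : ℕ) : SimpleGraph (Fin n → ZMod k) where
  Adj u v := u ≠ v ∧ ∃ j, (u j = v j + 1 ∨ u j = v j - 1) ∧ ∀ i ≠ j, u i = v i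
  symm := by
    constructor
    rintro u v ⟨hne, j, hj, hrest⟩
    refine ⟨hne.symm, j, ?_, fun i hi => (hrest i hi).symm⟩
    rcases hj with h | h
    · right; rw [h]; ring
    · left; rw [h]; ring
  loopless := by constructor; rintro u ⟨hne, _⟩; exact hne rfl

lemma key {V : Type*} (G : SimpleGraph V) (U : Set V) (C : Set V) (x0 : V)
    (hx0 : x0 ∈ C) (hdisj : ∀ c ∈ C, c ∉ closedNbhd G U)
    (hadj : ∀ a ∈ C, ∀ b ∈ C, a ≠ b → G.Adj a b)
    (hclose : ∀ x ∈ C, ∀ y, G.Adj x y → y ∈ C ∨ y ∈ closedNbhd G U) :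
    SurvivalBad G U := by
  by_cases hsub : (closedNbhd G U)ᶜ ⊆ C
  · exact Or.inr (Or.inl fun a ha b hb hab => hadj a (hsub ha) b (hsub hb) hab)
  · left
    rw [Set.not_subset] at hsub
    obtain ⟨v, hv, hvC⟩ := hsub
    refine ⟨fun h => (h ▸ hv : v ∈ (∅ : Set V)), fun hcon => ?_⟩
    have hx0' : x0 ∈ (closedNbhd G U)ᶜ := hdisj x0 hx0
    obtain ⟨w⟩ := hcon.preconnected ⟨x0, hx0'⟩ ⟨v, hv⟩
    have main : ∀ (a b : ↥(closedNbhd G U)ᶜ), (survival G U).Walk a b →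
        (a : V) ∈ C → (b : V) ∈ C := by
      intro a b w
      induction w with
      | nil => exact id
      | @cons a c b h p ih =>
        intro ha
        apply ih
        rcases hclose _ ha _ h with h' | h'
        · exact h'
        · exact absurd h' c.2
    exact hvC (main _ _ w hx0)

lemma mem_closedNbhd {V : Type*} (G : SimpleGraph V) (U : Set V) (v : V) :
    v ∈ closedNbhd G U ↔ v ∈ U ∨ ∃ u ∈ U, G.Adj u v := Iff.rfl

lemma nbConn_le {V : Type*} (G : SimpleGraph V) (U : Set V) (hf : U.Finite)
    (hbad : SurvivalBad G U) (k : ℕ) (hk : U.ncard ≤ k) : nbConn G ≤ k :=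
  le_trans (Nat.sInf_le ⟨U, hf, rfl, hbad⟩) hk


theorem stmt13 {Γ : Type*} [CommGroup Γ] [Fintype Γ] [DecidableEq Γ]
    (S : Finset Γ) (hgen : Subgroup.closure (↑S : Set Γ) = ⊤)
    (hSinv : ∀ s ∈ S, s⁻¹ ∈ S) (hSe : (1 : Γ) ∉ S)
    (G : SimpleGraph Γ) (hG : ∀ g h : Γ, G.Adj g h ↔ ∃ s ∈ S, h = g * s)
    (σ : Fin S.card → Γ) (hinj : Function.Injective σ) (hmem : ∀ i, σ i ∈ S)
    (hpair : ∀ i : ℕ, (h : 2 * i + 1 < S.card) →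
      σ ⟨2 * i, by omega⟩ * σ ⟨2 * i + 1, h⟩ ∉ S ∧
      σ ⟨2 * i, by omega⟩ * σ ⟨2 * i + 1, h⟩ ≠ 1) :
    nbConn G ≤ (S.card + 1) / 2 := by
  classical
  have hsurj : ∀ s ∈ S, ∃ j : Fin S.card, σ j = s := by
    have hbij : Function.Bijective
        (fun i : Fin S.card => (⟨σ i, hmem i⟩ : {x // x ∈ S})) := by
      rw [Fintype.bijective_iff_injective_and_card]
      exact ⟨fun a b h => hinj (congrArg Subtype.val h), by simp⟩
    intro s hs
    obtain ⟨j, hj⟩ := hbij.2 ⟨s, hs⟩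
    exact ⟨j, congrArg Subtype.val hj⟩
  let f : Fin (S.card / 2) → Γ := fun i =>
    σ ⟨2 * i.1, by have := i.2; omega⟩ * σ ⟨2 * i.1 + 1, by have := i.2; omega⟩
  let PF : Finset Γ := Finset.image f Finset.univ
  have hPFcard : PF.card ≤ S.card / 2 := by
    refine le_trans (Finset.card_image_le) ?_
    simp
  have hPFmem : ∀ g ∈ PF, ∃ i : ℕ, ∃ h : 2 * i + 1 < S.card,
      g = σ ⟨2 * i, by omega⟩ * σ ⟨2 * i + 1, h⟩ := by
    intro g hg
    simp only [PF, Finset.mem_image, Finset.mem_univ, true_and] at hg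
    obtain ⟨i, hi⟩ := hg
    exact ⟨i.1, by have := i.2; omega, hi.symm⟩
  have hcov : ∀ j : Fin S.card, j.1 < 2 * (S.card / 2) →
      σ j ∈ closedNbhd G (↑PF : Set Γ) := by
    intro j hj
    have hi2 : 2 * (j.1 / 2) + 1 < S.card := by omega
    have hfmem : σ ⟨2 * (j.1 / 2), by omega⟩ * σ ⟨2 * (j.1 / 2) + 1, hi2⟩ ∈ PF := by
      simp only [PF, Finset.mem_image, Finset.mem_univ, true_and]
      exact ⟨⟨j.1 / 2, by omega⟩, rfl⟩
    rcases Nat.even_or_odd j.1 with he | ho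
    · obtain ⟨k, hk⟩ := he
      have hje : j = ⟨2 * (j.1 / 2), by omega⟩ := by apply Fin.ext; simp; omega
      refine Or.inr ⟨_, hfmem, ?_⟩
      rw [hG]
      refine ⟨(σ ⟨2 * (j.1 / 2) + 1, hi2⟩)⁻¹, hSinv _ (hmem _), ?_⟩
      rw [mul_inv_cancel_right]
      exact congrArg σ hje
    · obtain ⟨k, hk⟩ := ho
      have hje : j = ⟨2 * (j.1 / 2) + 1, hi2⟩ := by apply Fin.ext; simp; omega
      refine Or.inr ⟨_, hfmem, ?_⟩
      rw [hG]
      refine ⟨(σ ⟨2 * (j.1 / 2), by omega⟩)⁻¹, hSinv _ (hmem _), ?_⟩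
      rw [mul_comm (σ ⟨2 * (j.1 / 2), by omega⟩) (σ ⟨2 * (j.1 / 2) + 1, hi2⟩),
        mul_inv_cancel_right]
      exact congrArg σ hje
  have h1P : (1 : Γ) ∉ closedNbhd G (↑PF : Set Γ) := by
    rw [mem_closedNbhd]
    rintro (h | ⟨u, hu, hadj⟩)
    · obtain ⟨i, hi, hgi⟩ := hPFmem 1 h
      exact (hpair i hi).2 hgi.symm
    · obtain ⟨i, hi, hgi⟩ := hPFmem u hu
      rw [hG] at hadj
      obtain ⟨s, hs, h1⟩ := hadj
      have hu' : u = s⁻¹ := eq_inv_of_mul_eq_one_left h1.symm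
      have hus : u ∈ S := hu' ▸ hSinv s hs
      rw [hgi] at hus
      exact (hpair i hi).1 hus
  rcases Nat.even_or_odd S.card with hev | hodd
  · -- even case
    obtain ⟨m, hm⟩ := hev
    have hbad : SurvivalBad G (↑PF : Set Γ) := by
      apply key G _ {1} 1 rfl
      · intro c hc
        rw [Set.mem_singleton_iff] at hc
        subst hc; exact h1P
      · intro a ha b hb hab
        rw [Set.mem_singleton_iff] at ha hb
        exact absurd (ha.trans hb.symm) hab
      · intro x hx y hxy
        rw [Set.mem_singleton_iff] at hx
        subst hx
        rw [hG] at hxy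
        obtain ⟨s, hs, hy⟩ := hxy
        obtain ⟨j, hj⟩ := hsurj s hs
        right
        rw [hy, one_mul, ← hj]
        exact hcov j (by have := j.2; omega)
    refine nbConn_le G _ (Finset.finite_toSet _) hbad _ ?_
    rw [Set.ncard_coe_finset]
    omega
  · -- odd case
    obtain ⟨m, hm⟩ := hodd
    obtain ⟨jl, hjl⟩ : ∃ jl : Fin S.card, jl.1 = S.card - 1 :=
      ⟨⟨S.card - 1, by omega⟩, rfl⟩
    by_cases hb : ∀ s ∈ S, σ jl * s ∈ S ∨ σ jl * s = 1
    · -- subcase b : C = {1, σ jl}, U = PF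
      have hlP : σ jl ∉ closedNbhd G (↑PF : Set Γ) := by
        rw [mem_closedNbhd]
        rintro (h | ⟨u, hu, hadj⟩)
        · obtain ⟨i, hi, hgi⟩ := hPFmem _ h
          have := hmem jl
          rw [hgi] at this
          exact (hpair i hi).1 this
        · obtain ⟨i, hi, hgi⟩ := hPFmem u hu
          rw [hG] at hadj
          obtain ⟨s, hs, h1⟩ := hadj
          have hu' : u = σ jl * s⁻¹ := by
            rw [h1, mul_assoc, mul_inv_cancel, mul_one]
          rcases hb s⁻¹ (hSinv s hs) with h' | h'
          · rw [← hu', hgi] at h'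
            exact (hpair i hi).1 h'
          · rw [← hu', hgi] at h'
            exact (hpair i hi).2 h'
      have hbad : SurvivalBad G (↑PF : Set Γ) := by
        apply key G _ {1, σ jl} 1 (Or.inl rfl)
        · rintro c (rfl | rfl)
          · exact h1P
          · exact hlP
        · rintro a (rfl | rfl) b (rfl | rfl) hab
          · exact absurd rfl hab
          · rw [hG]; exact ⟨σ jl, hmem jl, (one_mul _).symm⟩
          · rw [hG]; exact ⟨(σ jl)⁻¹, hSinv _ (hmem jl), (mul_inv_cancel _).symm⟩
          · exact absurd rfl hab
        · rintro x (rfl | rfl) y hxy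
          · rw [hG] at hxy
            obtain ⟨s, hs, hy⟩ := hxy
            obtain ⟨j, hj⟩ := hsurj s hs
            by_cases hjc : j.1 < 2 * (S.card / 2)
            · right; rw [hy, one_mul, ← hj]; exact hcov j hjc
            · left
              have hjjl : j = jl := by
                apply Fin.ext; have := j.2; omega
              rw [hy, one_mul, ← hj, hjjl]
              exact Or.inr rfl
          · rw [hG] at hxy
            obtain ⟨s, hs, hy⟩ := hxy
            rcases hb s hs with h' | h'
            · obtain ⟨j, hj⟩ := hsurj _ h'
              by_cases hjc : j.1 < 2 * (S.card / 2)
              · right; rw [hy, ← hj]; exact hcov j hjc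
              · left
                have hjjl : j = jl := by
                  apply Fin.ext; have := j.2; omega
                rw [hy, ← hj, hjjl]
                exact Or.inr rfl
            · left; rw [hy, h']; exact Or.inl rfl
      refine nbConn_le G _ (Finset.finite_toSet _) hbad _ ?_
      rw [Set.ncard_coe_finset]
      omega
    · -- subcase a
      push_neg at hb
      obtain ⟨s, hs, hs1, hs2⟩ := hb
      have hcov' : ∀ j : Fin S.card,
          σ j ∈ closedNbhd G (insert (σ jl * s) (↑PF : Set Γ)) := by
        intro j
        by_cases hjc : j.1 < 2 * (S.card / 2)
        · rcases hcov j hjc with h | ⟨u, hu, ha⟩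
          · exact Or.inl (Or.inr h)
          · exact Or.inr ⟨u, Or.inr hu, ha⟩
        · have hjjl : j = jl := by
            apply Fin.ext; have := j.2; omega
          refine Or.inr ⟨σ jl * s, Or.inl rfl, ?_⟩
          rw [hG]
          refine ⟨s⁻¹, hSinv s hs, ?_⟩
          rw [mul_assoc, mul_inv_cancel, mul_one, hjjl]
      have h1U : (1 : Γ) ∉ closedNbhd G (insert (σ jl * s) (↑PF : Set Γ)) := by
        rw [mem_closedNbhd]
        rintro (h | ⟨u, hu, hadj⟩)
        · rcases h with h | h
          · exact hs2 h.symm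
          · exact h1P (Or.inl h)
        · rcases hu with h | hu
          · rw [hG] at hadj
            obtain ⟨t, ht, h1⟩ := hadj
            have hut : u = t⁻¹ := eq_inv_of_mul_eq_one_left h1.symm
            rw [h] at hut
            exact hs1 (hut ▸ hSinv t ht)
          · exact h1P (Or.inr ⟨u, hu, hadj⟩)
      have hbad : SurvivalBad G (insert (σ jl * s) (↑PF : Set Γ)) := by
        apply key G _ {1} 1 rfl
        · intro c hc
          rw [Set.mem_singleton_iff] at hc
          subst hc; exact h1U
        · intro a ha b hb' hab
          rw [Set.mem_singleton_iff] at ha hb'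
          exact absurd (ha.trans hb'.symm) hab
        · intro y hy z hyz
          rw [Set.mem_singleton_iff] at hy
          subst hy
          rw [hG] at hyz
          obtain ⟨t, ht, hz⟩ := hyz
          obtain ⟨j, hj⟩ := hsurj t ht
          right
          rw [hz, one_mul, ← hj]
          exact hcov' j
      refine nbConn_le G _ ((Finset.finite_toSet _).insert _) hbad _ ?_
      have h1 : (insert (σ jl * s) (↑PF : Set Γ)).ncard ≤ PF.card + 1 := by
        refine le_trans (Set.ncard_insert_le _ _) ?_
        rw [Set.ncard_coe_finset]
      omega
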